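/- arXiv:1802.04836 — 2 statements merged into one kernel-verified Lean document; each statement's English description precedes it below -/
import Mathlib

section
/- The limit of the reachability iterates exists and satisfies the Bellman fixed-point equation: let S be a nonempty finite type, M : S → S → ℝ with nonnegative entries and all row sums equal to 1, and D ⊆ S. Define r₀ s = 1 if s ∈ D and 0 otherwise, and r_{n+1} s = 1 if s ∈ D and r_{n+1} s = ∑_{s'} M s s' * r_n s' otherwise. Then for every s the sequence (r_n s) converges to a limit r s with 0 ≤ r s ≤ 1, and the limit satisfies r s = 1 for s ∈ D and r s = ∑_{s'} M s s' * r s' for s ∉ D. -/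
open Finset

/-- `reachIter M D n s` is the probability of reaching the target set `D`
from state `s` within `n` steps in the Markov chain with transition matrix
`M`. -/
noncomputable def reachIter {S : Type*} [Fintype S] (M : S → S → ℝ)
    (D : Set S) [DecidablePred (· ∈ D)] : ℕ → S → ℝ
  | 0 => fun s => if s ∈ D then 1 else 0
  | n + 1 => fun s => if s ∈ D then 1 else ∑ s', M s s' * reachIter M D n s'

lemma reachIter_nonneg {S : Type*} [Fintype S] (M : S → S → ℝ)
    (hM0 : ∀ s s', 0 ≤ M s s') (D : Set S) [DecidablePred (· ∈ D)] :
    ∀ n s, 0 ≤ reachIter M D n s := by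
  intro n
  induction n with
  | zero => intro s; simp only [reachIter]; split <;> norm_num
  | succ n ih =>
    intro s; simp only [reachIter]; split
    · norm_num
    · exact Finset.sum_nonneg fun s' _ => mul_nonneg (hM0 s s') (ih s')

lemma reachIter_le_one {S : Type*} [Fintype S] (M : S → S → ℝ)
    (hM0 : ∀ s s', 0 ≤ M s s') (hM1 : ∀ s, ∑ s', M s s' = 1)
    (D : Set S) [DecidablePred (· ∈ D)] :
    ∀ n s, reachIter M D n s ≤ 1 := by
  intro n
  induction n with
  | zero => intro s; simp only [reachIter]; split <;> norm_num
  | succ n ih =>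
    intro s; simp only [reachIter]; split
    · norm_num
    · calc ∑ s', M s s' * reachIter M D n s' ≤ ∑ s', M s s' * 1 :=
            Finset.sum_le_sum fun s' _ =>
              mul_le_mul_of_nonneg_left (ih s') (hM0 s s')
        _ = 1 := by simpa using hM1 s

lemma reachIter_mono {S : Type*} [Fintype S] (M : S → S → ℝ)
    (hM0 : ∀ s s', 0 ≤ M s s') (D : Set S) [DecidablePred (· ∈ D)] :
    ∀ n s, reachIter M D n s ≤ reachIter M D (n + 1) s := by
  intro n
  induction n with
  | zero =>
    intro s
    simp only [reachIter]; split
    · norm_num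
    · exact Finset.sum_nonneg fun s' _ =>
        mul_nonneg (hM0 s s') (reachIter_nonneg M hM0 D 0 s')
  | succ n ih =>
    intro s
    simp only [reachIter]; split
    · norm_num
    · exact Finset.sum_le_sum fun s' _ =>
        mul_le_mul_of_nonneg_left (ih s') (hM0 s s')

/-- The limit of the reachability iterates exists and satisfies the Bellman
fixed-point equation: `r_n s → r s` with `0 ≤ r s ≤ 1`, `r s = 1` on `D`, and
`r s = ∑ s', M s s' * r s'` off `D`. -/
theorem reachIter_tendsto_fixedPoint {S : Type*} [Fintype S] [Nonempty S]
    (M : S → S → ℝ) (hM0 : ∀ s s', 0 ≤ M s s') (hM1 : ∀ s, ∑ s', M s s' = 1)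
    (D : Set S) [DecidablePred (· ∈ D)] :
    ∃ r : S → ℝ, ∀ s : S,
      Filter.Tendsto (fun n => reachIter M D n s) Filter.atTop (nhds (r s)) ∧
      0 ≤ r s ∧ r s ≤ 1 ∧
      (s ∈ D → r s = 1) ∧
      (s ∉ D → r s = ∑ s', M s s' * r s') := by
  have hmono : ∀ s, Monotone fun n => reachIter M D n s := fun s =>
    monotone_nat_of_le_succ fun n => reachIter_mono M hM0 D n s
  have hbdd : ∀ s, BddAbove (Set.range fun n => reachIter M D n s) := fun s =>
    ⟨1, by rintro x ⟨n, rfl⟩; exact reachIter_le_one M hM0 hM1 D n s⟩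
  set r : S → ℝ := fun s => ⨆ n, reachIter M D n s with hr
  have htend : ∀ s, Filter.Tendsto (fun n => reachIter M D n s)
      Filter.atTop (nhds (r s)) := fun s =>
    tendsto_atTop_ciSup (hmono s) (hbdd s)
  refine ⟨r, fun s => ⟨htend s, ?_, ?_, ?_, ?_⟩⟩
  · exact le_trans (reachIter_nonneg M hM0 D 0 s) (le_ciSup (hbdd s) 0)
  · exact ciSup_le fun n => reachIter_le_one M hM0 hM1 D n s
  · intro hs
    have : (fun n => reachIter M D n s) = fun _ => 1 := by
      funext n; cases n <;> simp [reachIter, hs]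
    exact tendsto_nhds_unique (htend s) (this ▸ tendsto_const_nhds)
  · intro hs
    have h1 : Filter.Tendsto (fun n => reachIter M D (n + 1) s)
        Filter.atTop (nhds (r s)) := (htend s).comp (Filter.tendsto_add_atTop_nat 1)
    have h2 : Filter.Tendsto (fun n => reachIter M D (n + 1) s)
        Filter.atTop (nhds (∑ s', M s s' * r s')) := by
      have : (fun n => reachIter M D (n + 1) s)
          = fun n => ∑ s', M s s' * reachIter M D n s' := by
        funext n; simp [reachIter, hs]
      rw [this]
      exact tendsto_finset_sum _ fun s' _ =>
        (tendsto_const_nhds.mul (htend s'))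
    exact tendsto_nhds_unique h1 h2
end

section
/- The sum of entries of a vector–matrix product through quasi-posynomial factors is a posynomial at feasible points: let π₀ : Fin n → ℝ be a fixed vector with nonnegative entries, not all zero, and let A₁, …, A_L be n × n matrices of functions (Fin m → ℝ) → ℝ, each entry of each A_ℓ being either the identically-zero function or a posynomial. Suppose that for some v₀ in the positive orthant the row vector π₀ ⬝ A₁(v₀) ⬝ ⋯ ⬝ A_L(v₀) is not the zero vector. Then the function v ↦ ∑_{j} (π₀ ⬝ A₁(v) ⬝ ⋯ ⬝ A_L(v)) j agrees with a posynomial on the positive orthant. -/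
/-- A posynomial in `m` positive real variables. -/
def IsPosynomial {m : ℕ} (f : (Fin m → ℝ) → ℝ) : Prop :=
  ∃ K : ℕ, 0 < K ∧ ∃ (c : Fin K → ℝ) (a : Fin m → Fin K → ℝ),
    (∀ k, 0 < c k) ∧ ∀ v : Fin m → ℝ, f v = ∑ k, c k * ∏ i, (v i) ^ (a i k)

/-- An entry of a quasi-posynomial matrix: either identically zero or a
posynomial. -/
def IsQuasiEntry {m : ℕ} (f : (Fin m → ℝ) → ℝ) : Prop :=
  (∀ v, f v = 0) ∨ IsPosynomial f

/-- The evaluation of a matrix of functions at a point `v`. -/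
def evalMatrix {n m : ℕ} (A : Matrix (Fin n) (Fin n) ((Fin m → ℝ) → ℝ))
    (v : Fin m → ℝ) : Matrix (Fin n) (Fin n) ℝ :=
  Matrix.of fun i j => A i j v

def Conic {m : ℕ} (f : (Fin m → ℝ) → ℝ) : Prop :=
  ∃ K : ℕ, ∃ (c : Fin K → ℝ) (a : Fin m → Fin K → ℝ),
    (∀ k, 0 ≤ c k) ∧ ∀ v : Fin m → ℝ, (∀ t, 0 < v t) →
      f v = ∑ k, c k * ∏ i, (v i) ^ (a i k)

lemma conic_zero' {m : ℕ} {f : (Fin m → ℝ) → ℝ} (h : ∀ v, f v = 0) : Conic f :=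
  ⟨0, 0, 0, fun k => le_rfl, fun v _ => by simp [h]⟩

lemma conic_const {m : ℕ} (r : ℝ) (hr : 0 ≤ r) : Conic (m := m) (fun _ => r) :=
  ⟨1, fun _ => r, 0, fun _ => hr, fun v _ => by simp⟩

lemma IsPosynomial.conic {m : ℕ} {f : (Fin m → ℝ) → ℝ} (h : IsPosynomial f) : Conic f := by
  obtain ⟨K, _, c, a, hc, hf⟩ := h
  exact ⟨K, c, a, fun k => (hc k).le, fun v _ => hf v⟩

lemma IsQuasiEntry.conic {m : ℕ} {f : (Fin m → ℝ) → ℝ} (h : IsQuasiEntry f) : Conic f := by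
  rcases h with h | h
  · exact conic_zero' h
  · exact h.conic

lemma Conic.add {m : ℕ} {f g : (Fin m → ℝ) → ℝ} (hf : Conic f) (hg : Conic g) :
    Conic (fun v => f v + g v) := by
  obtain ⟨K1, c1, a1, hc1, h1⟩ := hf
  obtain ⟨K2, c2, a2, hc2, h2⟩ := hg
  refine ⟨K1 + K2, Fin.append c1 c2, fun i => Fin.append (a1 i) (a2 i), ?_, ?_⟩
  · refine Fin.addCases (fun k => ?_) (fun k => ?_) <;>
      simp [Fin.append_left, Fin.append_right, hc1, hc2]
  · intro v hv
    rw [Fin.sum_univ_add]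
    simp only [Fin.append_left, Fin.append_right]
    rw [h1 v hv, h2 v hv]

lemma Conic.mul {m : ℕ} {f g : (Fin m → ℝ) → ℝ} (hf : Conic f) (hg : Conic g) :
    Conic (fun v => f v * g v) := by
  obtain ⟨K1, c1, a1, hc1, h1⟩ := hf
  obtain ⟨K2, c2, a2, hc2, h2⟩ := hg
  refine ⟨K1 * K2,
    fun k => c1 (finProdFinEquiv.symm k).1 * c2 (finProdFinEquiv.symm k).2,
    fun i k => a1 i (finProdFinEquiv.symm k).1 + a2 i (finProdFinEquiv.symm k).2,
    fun k => mul_nonneg (hc1 _) (hc2 _), ?_⟩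
  intro v hv
  calc f v * g v
      = ∑ p : Fin K1 × Fin K2,
          (c1 p.1 * ∏ i, (v i) ^ (a1 i p.1)) * (c2 p.2 * ∏ i, (v i) ^ (a2 i p.2)) := by
        rw [h1 v hv, h2 v hv, Finset.sum_mul_sum, Fintype.sum_prod_type]
    _ = ∑ p : Fin K1 × Fin K2,
          (c1 p.1 * c2 p.2) * ∏ i, (v i) ^ (a1 i p.1 + a2 i p.2) := by
        refine Finset.sum_congr rfl fun p _ => ?_
        have : (∏ i, (v i) ^ (a1 i p.1 + a2 i p.2))
            = (∏ i, (v i) ^ (a1 i p.1)) * ∏ i, (v i) ^ (a2 i p.2) := by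
          rw [← Finset.prod_mul_distrib]
          exact Finset.prod_congr rfl fun i _ => Real.rpow_add (hv i) _ _
        rw [this]; ring
    _ = _ := (Equiv.sum_comp (finProdFinEquiv.symm)
          (fun p : Fin K1 × Fin K2 =>
            (c1 p.1 * c2 p.2) * ∏ i, (v i) ^ (a1 i p.1 + a2 i p.2))).symm

lemma conic_finsum {m : ℕ} {ι : Type*} [DecidableEq ι] (s : Finset ι)
    (g : ι → (Fin m → ℝ) → ℝ) (hg : ∀ j ∈ s, Conic (g j)) :
    Conic (fun v => ∑ j ∈ s, g j v) := by
  induction s using Finset.induction_on with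
  | empty => exact conic_zero' (fun v => by simp)
  | @insert x t hx ih =>
    have h1 : Conic (fun v => g x v + ∑ j ∈ t, g j v) :=
      (hg x (Finset.mem_insert_self x t)).add
        (ih fun j hj => hg j (Finset.mem_insert_of_mem hj))
    obtain ⟨K, c, a, hc, h⟩ := h1
    exact ⟨K, c, a, hc, fun v hv => by
      simpa [Finset.sum_insert hx] using h v hv⟩

lemma conic_nonneg {m : ℕ} {f : (Fin m → ℝ) → ℝ} (hf : Conic f)
    {v : Fin m → ℝ} (hv : ∀ t, 0 < v t) : 0 ≤ f v := by
  obtain ⟨K, c, a, hc, h⟩ := hf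
  rw [h v hv]
  refine Finset.sum_nonneg fun k _ => mul_nonneg (hc k) (Finset.prod_nonneg fun i _ =>
    (Real.rpow_pos_of_pos (hv i) _).le)

lemma conic_vecMul_prod {n m : ℕ}
    (Ms : List (Matrix (Fin n) (Fin n) ((Fin m → ℝ) → ℝ)))
    (hMs : ∀ M ∈ Ms, ∀ i j, IsQuasiEntry (M i j)) :
    ∀ (w : Fin n → (Fin m → ℝ) → ℝ), (∀ i, Conic (w i)) → ∀ j,
      Conic (fun v => Matrix.vecMul (fun i => w i v)
        ((Ms.map (fun M => evalMatrix M v)).prod) j) := by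
  induction Ms with
  | nil =>
    intro w hw j
    simpa [Matrix.vecMul_one] using hw j
  | cons M Ms ih =>
    intro w hw j
    have hw' : ∀ i, Conic (fun v => Matrix.vecMul (fun i' => w i' v) (evalMatrix M v) i) := by
      intro i
      have heq : ∀ v, Matrix.vecMul (fun i' => w i' v) (evalMatrix M v) i
          = ∑ i', w i' v * M i' i v := by
        intro v; simp [Matrix.vecMul, dotProduct, evalMatrix]
      obtain ⟨K, c, a, hc, h⟩ := conic_finsum Finset.univ
        (fun i' => fun v => w i' v * M i' i v)
        (fun i' _ => (hw i').mul (hMs M List.mem_cons_self i' i).conic)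
      exact ⟨K, c, a, hc, fun v hv => (heq v).trans (h v hv)⟩
    obtain ⟨K, c, a, hc, h⟩ :=
      ih (fun N hN => hMs N (List.mem_cons_of_mem _ hN)) _ hw' j
    refine ⟨K, c, a, hc, fun v hv => ?_⟩
    have h2 := h v hv
    show Matrix.vecMul (fun i => w i v)
        (((M :: Ms).map (fun M => evalMatrix M v)).prod) j = _
    rw [List.map_cons, List.prod_cons, ← Matrix.vecMul_vecMul]
    exact h2


/-- The entry sum of the row vector `π₀ ⬝ A₁(v) ⬝ ⋯ ⬝ A_L(v)`, where `π₀` is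
a fixed nonnegative nonzero vector and the `A_ℓ` are quasi-posynomial
matrices, agrees with a posynomial on the positive orthant, provided the row
vector is nonzero at some point `v₀` of the positive orthant. -/
theorem vecMul_quasiPosynomial_prod_entrySum {n m L : ℕ}
    (π₀ : Fin n → ℝ) (hπ0 : ∀ j, 0 ≤ π₀ j) (hπne : π₀ ≠ 0)
    (A : Fin L → Matrix (Fin n) (Fin n) ((Fin m → ℝ) → ℝ))
    (hA : ∀ ℓ i j, IsQuasiEntry (A ℓ i j))
    (v₀ : Fin m → ℝ) (hv₀ : ∀ t, 0 < v₀ t)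
    (hne : Matrix.vecMul π₀ (List.ofFn fun ℓ => evalMatrix (A ℓ) v₀).prod ≠ 0) :
    ∃ h : (Fin m → ℝ) → ℝ, IsPosynomial h ∧
      ∀ v : Fin m → ℝ, (∀ t, 0 < v t) →
        ∑ j, Matrix.vecMul π₀ (List.ofFn fun ℓ => evalMatrix (A ℓ) v).prod j
          = h v := by
  classical
  have hofn : ∀ v : Fin m → ℝ, (List.ofFn fun ℓ => evalMatrix (A ℓ) v)
      = (List.ofFn A).map (fun M => evalMatrix M v) := by
    intro v; rw [List.map_ofFn]; rfl
  have hgc : ∀ j, Conic (fun v =>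
      Matrix.vecMul π₀ (List.ofFn fun ℓ => evalMatrix (A ℓ) v).prod j) := by
    intro j
    have hq : ∀ M ∈ List.ofFn A, ∀ i j', IsQuasiEntry (M i j') := by
      intro M hM i j'
      obtain ⟨ℓ, rfl⟩ := List.mem_ofFn.mp hM
      exact hA ℓ i j'
    obtain ⟨K, c, a, hc, h⟩ := conic_vecMul_prod (List.ofFn A) hq
      (fun i => fun _ => π₀ i) (fun i => conic_const _ (hπ0 i)) j
    refine ⟨K, c, a, hc, fun v hv => ?_⟩
    show Matrix.vecMul π₀ (List.ofFn fun ℓ => evalMatrix (A ℓ) v).prod j = _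
    rw [hofn v]
    exact h v hv
  have hsum : Conic (fun v => ∑ j,
      Matrix.vecMul π₀ (List.ofFn fun ℓ => evalMatrix (A ℓ) v).prod j) :=
    conic_finsum Finset.univ _ (fun j _ => hgc j)
  obtain ⟨K, c, a, hc, hrep⟩ := hsum
  -- positivity at v₀
  obtain ⟨j0, hj0⟩ := Function.ne_iff.mp hne
  have hpos : 0 < ∑ j,
      Matrix.vecMul π₀ (List.ofFn fun ℓ => evalMatrix (A ℓ) v₀).prod j := by
    refine Finset.sum_pos' (fun j _ => conic_nonneg (hgc j) hv₀)
      ⟨j0, Finset.mem_univ _, lt_of_le_of_ne (conic_nonneg (hgc j0) hv₀) ?_⟩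
    simpa using (Ne.symm hj0)
  have hKex : ∃ k, 0 < c k := by
    by_contra hno
    push_neg at hno
    have hz : ∀ k, c k = 0 := fun k => le_antisymm (hno k) (hc k)
    have := hrep v₀ hv₀
    simp only [hz, zero_mul, Finset.sum_const_zero] at this
    rw [this] at hpos
    exact lt_irrefl 0 hpos
  set s : Finset (Fin K) := Finset.univ.filter (fun k => 0 < c k) with hs_def
  have hscard : 0 < s.card := by
    refine Finset.card_pos.mpr ⟨hKex.choose, ?_⟩
    simp [hs_def, hKex.choose_spec]
  let e : Fin s.card → s := s.equivFin.symm
  refine ⟨fun v => ∑ k : Fin s.card, c (e k) * ∏ i, (v i) ^ (a i (e k)),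
    ⟨s.card, hscard, fun k => c (e k), fun i k => a i (e k),
      fun k => (Finset.mem_filter.mp (e k).2).2, fun v => rfl⟩, ?_⟩
  intro v hv
  have h1 := hrep v hv
  calc ∑ j, Matrix.vecMul π₀ (List.ofFn fun ℓ => evalMatrix (A ℓ) v).prod j
      = ∑ k : Fin K, c k * ∏ i, (v i) ^ (a i k) := h1
    _ = ∑ k ∈ s, c k * ∏ i, (v i) ^ (a i k) := by
        refine (Finset.sum_filter_of_ne ?_).symm
        intro k _ hk
        have hck : c k ≠ 0 := fun h0 => hk (by simp [h0])
        exact lt_of_le_of_ne (hc k) (Ne.symm hck)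
    _ = ∑ k : s, c k * ∏ i, (v i) ^ (a i k) := (Finset.sum_coe_sort s _).symm
    _ = ∑ k : Fin s.card, c (e k) * ∏ i, (v i) ^ (a i (e k)) :=
        (Equiv.sum_comp s.equivFin.symm
          (fun k : s => c k * ∏ i, (v i) ^ (a i (k : Fin K)))).symm
end
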